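/- Suppose R_Y ⫫ Y | (X, A) and R_{MY} ⫫ M | (X, A, Y). Then the ratio P(R_{MY} = 1 | X, A) / P(R_{MY} = 1 | X, A, M, Y) equals P(R_M = 1 | X, A, R_Y = 1) / P(R_M = 1 | X, A, Y, R_Y = 1), for all values making all conditioning events and denominators positive. -/

import Mathlib

open scoped Classical

noncomputable def Pr {Ω : Type*} [Fintype Ω] (p : Ω → ℝ) (E : Ω → Prop) : ℝ :=
  ∑ ω, if E ω then p ω else 0

noncomputable def cPr {Ω : Type*} [Fintype Ω] (p : Ω → ℝ) (E F : Ω → Prop) : ℝ :=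
  Pr p (fun ω => E ω ∧ F ω) / Pr p F

noncomputable def odds {Ω : Type*} [Fintype Ω] (p : Ω → ℝ) (E F : Ω → Prop) : ℝ :=
  cPr p E F / cPr p (fun ω => ¬ E ω) F

lemma Pr_congr {Ω : Type*} [Fintype Ω] (p : Ω → ℝ) {E F : Ω → Prop}
    (h : ∀ ω, E ω ↔ F ω) : Pr p E = Pr p F := by
  unfold Pr
  refine Finset.sum_congr rfl fun ω _ => ?_
  simp [h ω]

lemma Pr_mono {Ω : Type*} [Fintype Ω] {p : Ω → ℝ} (hp : ∀ ω, 0 ≤ p ω) {E F : Ω → Prop}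
    (h : ∀ ω, E ω → F ω) : Pr p E ≤ Pr p F := by
  unfold Pr
  refine Finset.sum_le_sum fun ω _ => ?_
  by_cases hE : E ω
  · simp [hE, h ω hE]
  · by_cases hF : F ω <;> simp [hE, hF, hp ω]

/-- Identification of the combined tilting function `g_b` under assumption S2*. -/
theorem S2_star_tilting_identification
    {Ω 𝒳 𝒜 ℳ 𝒴 : Type*} [Fintype Ω]
    (p : Ω → ℝ) (hp : ∀ ω, 0 ≤ p ω) (hsum : ∑ ω, p ω = 1)
    (X : Ω → 𝒳) (A : Ω → 𝒜) (M : Ω → ℳ) (Y : Ω → 𝒴) (RM RY : Ω → ℕ)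
    (hRM : ∀ ω, RM ω = 0 ∨ RM ω = 1) (hRY : ∀ ω, RY ω = 0 ∨ RY ω = 1)
    -- R_Y ⫫ Y ∣ (X, A)
    (h1 : ∀ (ry : ℕ) (y : 𝒴) (x : 𝒳) (a : 𝒜),
      0 < Pr p (fun ω => Y ω = y ∧ X ω = x ∧ A ω = a) →
      cPr p (fun ω => RY ω = ry) (fun ω => Y ω = y ∧ X ω = x ∧ A ω = a)
        = cPr p (fun ω => RY ω = ry) (fun ω => X ω = x ∧ A ω = a))
    -- R_{MY} ⫫ M ∣ (X, A, Y), where R_{MY} = R_M · R_Y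
    (h2 : ∀ (r : ℕ) (m : ℳ) (x : 𝒳) (a : 𝒜) (y : 𝒴),
      0 < Pr p (fun ω => M ω = m ∧ X ω = x ∧ A ω = a ∧ Y ω = y) →
      cPr p (fun ω => RM ω * RY ω = r) (fun ω => M ω = m ∧ X ω = x ∧ A ω = a ∧ Y ω = y)
        = cPr p (fun ω => RM ω * RY ω = r) (fun ω => X ω = x ∧ A ω = a ∧ Y ω = y)) :
    ∀ (x : 𝒳) (a : 𝒜) (m : ℳ) (y : 𝒴),
      0 < Pr p (fun ω => X ω = x ∧ A ω = a ∧ M ω = m ∧ Y ω = y) →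
      0 < Pr p (fun ω => X ω = x ∧ A ω = a ∧ RY ω = 1) →
      0 < Pr p (fun ω => X ω = x ∧ A ω = a ∧ Y ω = y ∧ RY ω = 1) →
      0 < cPr p (fun ω => RM ω = 1 ∧ RY ω = 1)
            (fun ω => X ω = x ∧ A ω = a ∧ M ω = m ∧ Y ω = y) →
      0 < cPr p (fun ω => RM ω = 1) (fun ω => X ω = x ∧ A ω = a ∧ Y ω = y ∧ RY ω = 1) →
      cPr p (fun ω => RM ω = 1 ∧ RY ω = 1) (fun ω => X ω = x ∧ A ω = a)
          / cPr p (fun ω => RM ω = 1 ∧ RY ω = 1)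
              (fun ω => X ω = x ∧ A ω = a ∧ M ω = m ∧ Y ω = y)
        = cPr p (fun ω => RM ω = 1) (fun ω => X ω = x ∧ A ω = a ∧ RY ω = 1)
          / cPr p (fun ω => RM ω = 1) (fun ω => X ω = x ∧ A ω = a ∧ Y ω = y ∧ RY ω = 1) := by
  intro x a m y hP2 hQ0 hQ1 hC2 hC1
  -- canonical quantities
  set a0 := Pr p (fun ω => X ω = x ∧ A ω = a) with ha0def
  set a1 := Pr p (fun ω => X ω = x ∧ A ω = a ∧ Y ω = y) with ha1def
  set a2 := Pr p (fun ω => X ω = x ∧ A ω = a ∧ M ω = m ∧ Y ω = y) with ha2def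
  set b0 := Pr p (fun ω => (RM ω = 1 ∧ RY ω = 1) ∧ X ω = x ∧ A ω = a) with hb0def
  set b1 := Pr p (fun ω => (RM ω = 1 ∧ RY ω = 1) ∧ X ω = x ∧ A ω = a ∧ Y ω = y) with hb1def
  set b2 := Pr p (fun ω => (RM ω = 1 ∧ RY ω = 1) ∧ X ω = x ∧ A ω = a ∧ M ω = m ∧ Y ω = y)
    with hb2def
  set q0 := Pr p (fun ω => X ω = x ∧ A ω = a ∧ RY ω = 1) with hq0def
  set q1 := Pr p (fun ω => X ω = x ∧ A ω = a ∧ Y ω = y ∧ RY ω = 1) with hq1def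
  -- positivity
  have ha2 : 0 < a2 := hP2
  have ha1 : 0 < a1 :=
    lt_of_lt_of_le ha2 (Pr_mono hp (by tauto))
  have ha0 : 0 < a0 :=
    lt_of_lt_of_le ha1 (Pr_mono hp (by tauto))
  have hq0' : 0 < q0 := hQ0
  have hq1' : 0 < q1 := hQ1
  -- h1 specialized
  have hA1 : Pr p (fun ω => RY ω = 1 ∧ Y ω = y ∧ X ω = x ∧ A ω = a)
      / Pr p (fun ω => Y ω = y ∧ X ω = x ∧ A ω = a)
      = Pr p (fun ω => RY ω = 1 ∧ X ω = x ∧ A ω = a) / a0 := by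
    have hpos : 0 < Pr p (fun ω => Y ω = y ∧ X ω = x ∧ A ω = a) := by
      rw [Pr_congr p (F := fun ω => X ω = x ∧ A ω = a ∧ Y ω = y) (fun ω => by tauto)]
      exact ha1
    exact h1 1 y x a hpos
  have hA1' : q1 / a1 = q0 / a0 := by
    rw [hq1def, hq0def,
      Pr_congr p (E := fun ω => X ω = x ∧ A ω = a ∧ Y ω = y ∧ RY ω = 1)
        (F := fun ω => RY ω = 1 ∧ Y ω = y ∧ X ω = x ∧ A ω = a) (fun ω => by tauto),
      Pr_congr p (E := fun ω => X ω = x ∧ A ω = a ∧ RY ω = 1)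
        (F := fun ω => RY ω = 1 ∧ X ω = x ∧ A ω = a) (fun ω => by tauto),
      ha1def,
      Pr_congr p (E := fun ω => X ω = x ∧ A ω = a ∧ Y ω = y)
        (F := fun ω => Y ω = y ∧ X ω = x ∧ A ω = a) (fun ω => by tauto)]
    exact hA1
  have hkey : q1 * a0 = q0 * a1 := (div_eq_div_iff ha1.ne' ha0.ne').mp hA1'
  -- h2 specialized
  have hmul : ∀ ω, RM ω * RY ω = 1 ↔ RM ω = 1 ∧ RY ω = 1 := fun ω => by
    rcases hRM ω with h | h <;> rcases hRY ω with h' | h' <;> simp [h, h']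
  have hB : b2 / a2 = b1 / a1 := by
    have hpos : 0 < Pr p (fun ω => M ω = m ∧ X ω = x ∧ A ω = a ∧ Y ω = y) := by
      rw [Pr_congr p (F := fun ω => X ω = x ∧ A ω = a ∧ M ω = m ∧ Y ω = y) (fun ω => by tauto)]
      exact ha2
    have := h2 1 m x a y hpos
    unfold cPr at this
    rw [hb2def, hb1def, ha2def, ha1def,
      Pr_congr p (E := fun ω => (RM ω = 1 ∧ RY ω = 1) ∧ X ω = x ∧ A ω = a ∧ M ω = m ∧ Y ω = y)
        (F := fun ω => RM ω * RY ω = 1 ∧ M ω = m ∧ X ω = x ∧ A ω = a ∧ Y ω = y)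
        (fun ω => by have := hmul ω; tauto),
      Pr_congr p (E := fun ω => X ω = x ∧ A ω = a ∧ M ω = m ∧ Y ω = y)
        (F := fun ω => M ω = m ∧ X ω = x ∧ A ω = a ∧ Y ω = y) (fun ω => by tauto),
      Pr_congr p (E := fun ω => (RM ω = 1 ∧ RY ω = 1) ∧ X ω = x ∧ A ω = a ∧ Y ω = y)
        (F := fun ω => RM ω * RY ω = 1 ∧ X ω = x ∧ A ω = a ∧ Y ω = y)
        (fun ω => by have := hmul ω; tauto)]
    exact this
  -- rewrite the cPr's in hC1 and the goal
  have hC1' : 0 < b1 / q1 := by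
    have : cPr p (fun ω => RM ω = 1) (fun ω => X ω = x ∧ A ω = a ∧ Y ω = y ∧ RY ω = 1)
        = b1 / q1 := by
      unfold cPr
      rw [hb1def, hq1def,
        Pr_congr p (E := fun ω => RM ω = 1 ∧ X ω = x ∧ A ω = a ∧ Y ω = y ∧ RY ω = 1)
          (F := fun ω => (RM ω = 1 ∧ RY ω = 1) ∧ X ω = x ∧ A ω = a ∧ Y ω = y)
          (fun ω => by tauto)]
    rw [← this]; exact hC1
  have hb1 : 0 < b1 := by
    have := mul_pos hC1' hq1'
    rwa [div_mul_cancel₀ _ hq1'.ne'] at this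
  -- Final goal rewriting
  show cPr p (fun ω => RM ω = 1 ∧ RY ω = 1) (fun ω => X ω = x ∧ A ω = a)
          / cPr p (fun ω => RM ω = 1 ∧ RY ω = 1)
              (fun ω => X ω = x ∧ A ω = a ∧ M ω = m ∧ Y ω = y)
        = cPr p (fun ω => RM ω = 1) (fun ω => X ω = x ∧ A ω = a ∧ RY ω = 1)
          / cPr p (fun ω => RM ω = 1) (fun ω => X ω = x ∧ A ω = a ∧ Y ω = y ∧ RY ω = 1)
  unfold cPr
  rw [Pr_congr p (E := fun ω => RM ω = 1 ∧ X ω = x ∧ A ω = a ∧ RY ω = 1)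
        (F := fun ω => (RM ω = 1 ∧ RY ω = 1) ∧ X ω = x ∧ A ω = a) (fun ω => by tauto),
      Pr_congr p (E := fun ω => RM ω = 1 ∧ X ω = x ∧ A ω = a ∧ Y ω = y ∧ RY ω = 1)
        (F := fun ω => (RM ω = 1 ∧ RY ω = 1) ∧ X ω = x ∧ A ω = a ∧ Y ω = y)
        (fun ω => by tauto)]
  show b0 / a0 / (b2 / a2) = b0 / q0 / (b1 / q1)
  rw [hB]
  have h0 := ha0.ne'
  have h1' := ha1.ne'
  have h2' := hq0'.ne'
  have h3' := hq1'.ne'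
  have h4' := hb1.ne'
  field_simp
  linear_combination (-b0) * hkey
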